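/- Every finite tree admits a tricoloring (B, R, G) with: B, G, and the endpoints of R partitioning the vertices; edges of R pairwise non-adjacent; every edge with one endpoint in G having its other endpoint in B; and every vertex of B having at least two neighbors in G. Namely, take B to be the positive vertex-cover backbone, G the negative backbone, and R the set of exclusive edges. -/

import Mathlib

set_option linter.unusedSectionVars false
set_option linter.unusedVariables false
set_option maxHeartbeats 1000000

variable {V : Type*} [Fintype V] [DecidableEq V]

/-- `C` is a vertex cover of `A`. -/
def IsVC (A : SimpleGraph V) (C : Set V) : Prop :=
  ∀ e ∈ A.edgeSet, ∃ v ∈ C, v ∈ e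

/-- `C` is a minimum vertex cover of `A`. -/
def IsMinVC (A : SimpleGraph V) (C : Set V) : Prop :=
  IsVC A C ∧ ∀ D : Set V, IsVC A D → C.ncard ≤ D.ncard

/-- `M` is a matching of `A`: a set of edges, pairwise non-adjacent. -/
def IsMatch (A : SimpleGraph V) (M : Set (Sym2 V)) : Prop :=
  M ⊆ A.edgeSet ∧ ∀ e ∈ M, ∀ f ∈ M, e ≠ f → ∀ v : V, ¬(v ∈ e ∧ v ∈ f)

/-- `M` is a maximum matching of `A`. -/
def IsMaxMatch (A : SimpleGraph V) (M : Set (Sym2 V)) : Prop :=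
  IsMatch A M ∧ ∀ N : Set (Sym2 V), IsMatch A N → N.ncard ≤ M.ncard

/-- endpoints of a set of edges -/
def Rsupp (R : Set (Sym2 V)) : Set V := {v | ∃ e ∈ R, v ∈ e}

/-- the tricoloring conditions (iii) of the paper -/
def IsBColoring (A : SimpleGraph V) (B : Set V) (R : Set (Sym2 V)) (G : Set V) : Prop :=
  R ⊆ A.edgeSet ∧
  B ∪ G ∪ Rsupp R = Set.univ ∧
  Disjoint B G ∧ Disjoint B (Rsupp R) ∧ Disjoint G (Rsupp R) ∧
  (∀ e ∈ R, ∀ f ∈ R, e ≠ f → ∀ v : V, ¬(v ∈ e ∧ v ∈ f)) ∧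
  (∀ v w : V, A.Adj v w → v ∈ G → w ∈ B) ∧
  (∀ b ∈ B, 2 ≤ (A.neighborSet b ∩ G).ncard)

/-- positive vertex-cover backbone -/
def PosBB (A : SimpleGraph V) : Set V := {v | ∀ C : Set V, IsMinVC A C → v ∈ C}

/-- negative vertex-cover backbone -/
def NegBB (A : SimpleGraph V) : Set V := {v | ∀ C : Set V, IsMinVC A C → v ∉ C}

/-- degenerate vertex -/
def Degen (A : SimpleGraph V) (v : V) : Prop :=
  (∃ C : Set V, IsMinVC A C ∧ v ∈ C) ∧ (∃ C : Set V, IsMinVC A C ∧ v ∉ C)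

/-- exclusive edge -/
def Exclusive (A : SimpleGraph V) (e : Sym2 V) : Prop :=
  e ∈ A.edgeSet ∧ (∀ v ∈ e, Degen A v) ∧
  ∀ C : Set V, IsMinVC A C → ∃ v ∈ e, v ∉ C

/-! ### Auxiliary lemmas -/

open SimpleGraph

lemma isVC_univ (A : SimpleGraph V) : IsVC A Set.univ := by
  intro e he
  induction e with
  | _ a b => exact ⟨a, trivial, Sym2.mem_mk_left a b⟩

lemma exists_minVC (A : SimpleGraph V) : ∃ C, IsMinVC A C := by
  classical
  have hne : {n | ∃ C, IsVC A C ∧ C.ncard = n}.Nonempty :=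
    ⟨(Set.univ : Set V).ncard, Set.univ, isVC_univ A, rfl⟩
  obtain ⟨C, hC, hCc⟩ := Nat.sInf_mem hne
  refine ⟨C, hC, fun D hD => ?_⟩
  rw [hCc]
  exact Nat.sInf_le ⟨D, hD, rfl⟩

lemma adj_of_mem_edge {A : SimpleGraph V} {e : Sym2 V} {z : V}
    (he : e ∈ A.edgeSet) (hz : z ∈ e) : ∃ w, A.Adj z w ∧ e = s(z, w) := by
  induction e with
  | _ a b =>
    rw [Sym2.mem_iff] at hz
    rcases hz with rfl | rfl
    · exact ⟨b, he, rfl⟩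
    · exact ⟨a, A.adj_symm he, Sym2.eq_swap⟩

lemma not_mem_minVC_of_isolated {A : SimpleGraph V} {C : Set V} {z : V}
    (hC : IsMinVC A C) (hz : ∀ w, ¬ A.Adj z w) : z ∉ C := by
  intro hzC
  have hVC : IsVC A (C \ {z}) := by
    intro e he
    obtain ⟨c, hcC, hce⟩ := hC.1 e he
    refine ⟨c, ⟨hcC, ?_⟩, hce⟩
    rintro rfl
    obtain ⟨w, hw, -⟩ := adj_of_mem_edge he hce
    exact hz w hw
  have := hC.2 _ hVC
  have hlt : (C \ {z}).ncard < C.ncard :=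
    Set.ncard_diff_singleton_lt_of_mem hzC C.toFinite
  omega

lemma glue_isVC {A : SimpleGraph V} {C D : Set V} {U : Set V}
    (hU : ∀ a b, A.Adj a b → (a ∈ U ↔ b ∈ U))
    (hC : IsVC A C) (hD : IsVC A D) : IsVC A ((C \ U) ∪ (D ∩ U)) := by
  intro e he
  have hmemU : ∀ z ∈ e, z ∈ U → ∀ w ∈ e, w ∈ U := by
    intro z hz hzU w hw
    induction e with
    | _ a b =>
      rw [Sym2.mem_iff] at hz hw
      have hab : A.Adj a b := he
      rcases hz with rfl | rfl <;> rcases hw with rfl | rfl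
      · exact hzU
      · exact (hU _ _ hab).1 hzU
      · exact (hU _ _ hab).2 hzU
      · exact hzU
  by_cases h : ∃ z ∈ e, z ∈ U
  · obtain ⟨z, hz, hzU⟩ := h
    obtain ⟨c, hcD, hce⟩ := hD e he
    exact ⟨c, Or.inr ⟨hcD, hmemU z hz hzU c hce⟩, hce⟩
  · push_neg at h
    obtain ⟨c, hcC, hce⟩ := hC e he
    exact ⟨c, Or.inl ⟨hcC, h c hce⟩, hce⟩

lemma glue_isMinVC {A : SimpleGraph V} {C D : Set V} {U : Set V}
    (hU : ∀ a b, A.Adj a b → (a ∈ U ↔ b ∈ U))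
    (hC : IsMinVC A C) (hD : IsMinVC A D) : IsMinVC A ((C \ U) ∪ (D ∩ U)) := by
  have h1 : IsVC A ((C \ U) ∪ (D ∩ U)) := glue_isVC hU hC.1 hD.1
  have h2 : IsVC A ((D \ U) ∪ (C ∩ U)) := glue_isVC hU hD.1 hC.1
  have hcd : C.ncard = D.ncard := le_antisymm (hC.2 D hD.1) (hD.2 C hC.1)
  have e1 : ((C \ U) ∪ (D ∩ U)).ncard = (C \ U).ncard + (D ∩ U).ncard := by
    rw [Set.ncard_union_eq (by
      rw [Set.disjoint_left]; rintro a ⟨-, haU⟩ ⟨-, haU'⟩; exact haU haU')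
      (C \ U).toFinite (D ∩ U).toFinite]
  have e2 : ((D \ U) ∪ (C ∩ U)).ncard = (D \ U).ncard + (C ∩ U).ncard := by
    rw [Set.ncard_union_eq (by
      rw [Set.disjoint_left]; rintro a ⟨-, haU⟩ ⟨-, haU'⟩; exact haU haU')
      (D \ U).toFinite (C ∩ U).toFinite]
  have eC : (C ∩ U).ncard + (C \ U).ncard = C.ncard :=
    Set.ncard_inter_add_ncard_diff_eq_ncard C U C.toFinite
  have eD : (D ∩ U).ncard + (D \ U).ncard = D.ncard :=
    Set.ncard_inter_add_ncard_diff_eq_ncard D U D.toFinite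
  have g1 : C.ncard ≤ ((C \ U) ∪ (D ∩ U)).ncard := hC.2 _ h1
  have g2 : C.ncard ≤ ((D \ U) ∪ (C ∩ U)).ncard := hC.2 _ h2
  have key : ((C \ U) ∪ (D ∩ U)).ncard = C.ncard := by omega
  exact ⟨h1, fun E hE => key ▸ hC.2 E hE⟩

lemma exists_leaf {A : SimpleGraph V} (hac : A.IsAcyclic) {a b : V} (hab : A.Adj a b) :
    ∃ u v, A.Adj u v ∧ ∀ w, A.Adj u w → w = v := by
  classical
  set Pn : ℕ → Prop := fun n => ∃ (x y : V) (p : A.Walk x y), p.IsPath ∧ p.length = n with hPn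
  have h1 : Pn 1 := ⟨a, b, Walk.cons hab Walk.nil, by simp [hab.ne], by simp⟩
  have hbd : ∀ n, Pn n → n < Fintype.card V := by
    rintro n ⟨x, y, p, hp, rfl⟩
    exact hp.length_lt
  have hmax : ∃ n, Pn n ∧ ¬ Pn (n + 1) := by
    by_contra h
    push_neg at h
    have : ∀ k, Pn (1 + k) := by
      intro k
      induction k with
      | zero => exact h1
      | succ k ih => exact (by rw [show 1 + (k+1) = (1+k) + 1 by omega]; exact h _ ih)
    have := hbd _ (this (Fintype.card V))
    omega
  obtain ⟨n, ⟨x, y, p, hp, hlen⟩, hno⟩ := hmax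
  have hn1 : 1 ≤ n := by
    by_contra h
    push_neg at h
    interval_cases n
    · exact hno h1
  cases p with
  | nil => simp at hlen; omega
  | @cons _ c _ h q =>
    refine ⟨x, c, h, fun w hw => ?_⟩
    by_cases hws : w ∈ (Walk.cons h q).support
    · rw [Walk.support_cons] at hws
      have hwx : w ≠ x := fun hh => A.irrefl (hh ▸ hw)
      have hwq : w ∈ q.support := by
        rcases List.mem_cons.1 hws with hws | hws
        · exact absurd hws hwx
        · exact hws
      have hqpath : q.IsPath := hp.of_cons
      have hxq : x ∉ q.support := ((Walk.cons_isPath_iff h q).1 hp).2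
      set r := q.takeUntil w hwq with hr
      have hrpath : r.IsPath := hqpath.takeUntil hwq
      have hxr : x ∉ r.support := fun hmem => hxq (q.support_takeUntil_subset hwq hmem)
      have hP2 : (Walk.cons h r).IsPath := (Walk.cons_isPath_iff h r).2 ⟨hrpath, hxr⟩
      have hP1 : (Walk.cons hw Walk.nil).IsPath := by simp [hw.ne]
      have := hac.path_unique ⟨Walk.cons hw Walk.nil, hP1⟩ ⟨Walk.cons h r, hP2⟩
      have hlen2 : (Walk.cons hw (Walk.nil : A.Walk w w)).length = (Walk.cons h r).length := by
        rw [Subtype.ext_iff] at this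
        exact congrArg Walk.length this
      simp only [Walk.length_cons, Walk.length_nil] at hlen2
      have : r.length = 0 := by omega
      exact (Walk.eq_of_length_eq_zero this).symm
    · exfalso
      apply hno
      refine ⟨w, y, Walk.cons hw.symm (Walk.cons h q), ?_, by simp [hlen]⟩
      exact (Walk.cons_isPath_iff _ _).2 ⟨hp, hws⟩

/-- delete all edges at `v` -/
def Gdel (A : SimpleGraph V) (v : V) : SimpleGraph V where
  Adj a b := A.Adj a b ∧ a ≠ v ∧ b ≠ v
  symm := ⟨fun a b ⟨h, ha, hb⟩ => ⟨h.symm, hb, ha⟩⟩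
  loopless := ⟨fun a ⟨h, _, _⟩ => A.irrefl h⟩

lemma Gdel_le (A : SimpleGraph V) (v : V) : Gdel A v ≤ A := fun {a b} h => h.1

lemma Gdel_isolated (A : SimpleGraph V) (v : V) : ∀ w, ¬ (Gdel A v).Adj v w :=
  fun _ h => h.2.1 rfl

lemma Gdel_acyclic {A : SimpleGraph V} (hac : A.IsAcyclic) (v : V) :
    (Gdel A v).IsAcyclic := by
  intro x c hc
  exact hac (c.mapLe (Gdel_le A v)) (hc.mapLe _)

lemma support_mapLe {G G' : SimpleGraph V} (h : G ≤ G') {u v : V} (p : G.Walk u v) :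
    (p.mapLe h).support = p.support := by
  exact Walk.support_mapLe_eq_support h p

lemma Gdel_walk_not_mem_support {A : SimpleGraph V} {v : V} :
    ∀ {a b : V} (p : (Gdel A v).Walk a b), a ≠ v → v ∉ p.support := by
  intro a b p
  induction p with
  | nil => intro h; simpa using fun hh => h hh.symm
  | cons hadj q ih =>
    intro h
    rw [Walk.support_cons]
    intro hmem
    rcases List.mem_cons.1 hmem with hmem | hmem
    · exact h hmem.symm
    · exact ih (fun hh => hadj.2.2 hh) hmem

lemma Gdel_separation {A : SimpleGraph V} (hac : A.IsAcyclic) {v x x' : V}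
    (hvx : A.Adj v x) (hvx' : A.Adj v x') (hne : x ≠ x') :
    ¬ (Gdel A v).Reachable x x' := by
  intro hreach
  obtain ⟨w⟩ := hreach
  set p := w.toPath with hp
  have hq : ((p : (Gdel A v).Walk x x').mapLe (Gdel_le A v)).IsPath :=
    (Walk.mapLe_isPath _).2 p.2
  have hxv : x ≠ v := fun h => A.irrefl (h ▸ hvx)
  have hvsup : v ∉ ((p : (Gdel A v).Walk x x').mapLe (Gdel_le A v)).support := by
    rw [support_mapLe]
    exact fun hmem => Gdel_walk_not_mem_support _ hxv hmem
  set q := (p : (Gdel A v).Walk x x').mapLe (Gdel_le A v) with hqdef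
  have hP2 : (Walk.cons hvx q).IsPath := (Walk.cons_isPath_iff _ _).2 ⟨hq, hvsup⟩
  have hP1 : (Walk.cons hvx' Walk.nil).IsPath := by simp [hvx'.ne]
  have := hac.path_unique ⟨Walk.cons hvx' Walk.nil, hP1⟩ ⟨Walk.cons hvx q, hP2⟩
  have hlen : (Walk.cons hvx' (Walk.nil : A.Walk x' x')).length = (Walk.cons hvx q).length := by
    rw [Subtype.ext_iff] at this
    exact congrArg Walk.length this
  simp only [Walk.length_cons, Walk.length_nil] at hlen
  have hq0 : q.length = 0 := by omega
  exact hne (Walk.eq_of_length_eq_zero hq0)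

/-- the other neighbors of v -/
def Sset (A : SimpleGraph V) (u v : V) : Set V := {x | A.Adj v x ∧ x ≠ u}

section transfer
variable {A : SimpleGraph V} {u v : V}

lemma leaf_edge_eq (hleaf : ∀ w, A.Adj u w → w = v) {e : Sym2 V}
    (he : e ∈ A.edgeSet) (hue : u ∈ e) : e = s(u, v) := by
  obtain ⟨w, hw, rfl⟩ := adj_of_mem_edge he hue
  rw [hleaf w hw]

lemma Gdel_edge_mem {e : Sym2 V} :
    e ∈ (Gdel A v).edgeSet ↔ e ∈ A.edgeSet ∧ v ∉ e := by
  induction e with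
  | _ a b =>
    simp only [mem_edgeSet, Sym2.mem_iff]
    constructor
    · rintro ⟨h, ha, hb⟩
      exact ⟨h, by rintro (rfl | rfl) <;> simp_all⟩
    · rintro ⟨h, hv⟩
      push_neg at hv
      exact ⟨h, fun hh => hv.1 hh.symm, fun hh => hv.2 hh.symm⟩

lemma Gdel_edge_no_u (hleaf : ∀ w, A.Adj u w → w = v) {e : Sym2 V}
    (he : e ∈ (Gdel A v).edgeSet) : u ∉ e ∧ v ∉ e := by
  obtain ⟨heA, hv⟩ := Gdel_edge_mem.1 he
  refine ⟨fun hu => ?_, hv⟩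
  have := leaf_edge_eq hleaf heA hu
  subst this
  exact hv (Sym2.mem_mk_right u v)

lemma Gdel_isolated_u (hleaf : ∀ w, A.Adj u w → w = v) (huv : A.Adj u v) :
    ∀ w, ¬ (Gdel A v).Adj u w := by
  rintro w ⟨h, hu, hw⟩
  exact hw (hleaf w h)

lemma tfam_vc_v {D : Set V} (hleaf : ∀ w, A.Adj u w → w = v)
    (hD : IsVC (Gdel A v) D) : IsVC A (insert v D) := by
  intro e he
  by_cases hv : v ∈ e
  · exact ⟨v, Set.mem_insert v D, hv⟩
  · obtain ⟨c, hcD, hce⟩ := hD e (Gdel_edge_mem.2 ⟨he, hv⟩)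
    exact ⟨c, Set.mem_insert_of_mem _ hcD, hce⟩

lemma tfam_vc_u {D : Set V} (hleaf : ∀ w, A.Adj u w → w = v)
    (hD : IsVC (Gdel A v) D) (hS : Sset A u v ⊆ D) : IsVC A (insert u D) := by
  intro e he
  by_cases hv : v ∈ e
  · obtain ⟨w, hw, rfl⟩ := adj_of_mem_edge he hv
    by_cases hwu : w = u
    · exact ⟨u, Set.mem_insert u D, by rw [hwu]; exact Sym2.mem_mk_right v u⟩
    · exact ⟨w, Set.mem_insert_of_mem _ (hS ⟨hw, hwu⟩), Sym2.mem_mk_right v w⟩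
  · obtain ⟨c, hcD, hce⟩ := hD e (Gdel_edge_mem.2 ⟨he, hv⟩)
    exact ⟨c, Set.mem_insert_of_mem _ hcD, hce⟩

lemma tfam_low {D C : Set V} (huv : A.Adj u v) (hleaf : ∀ w, A.Adj u w → w = v)
    (hD : IsMinVC (Gdel A v) D) (hC : IsVC A C) : D.ncard + 1 ≤ C.ncard := by
  have hCvc : IsVC (Gdel A v) (C \ {u, v}) := by
    intro e he
    obtain ⟨hu, hv⟩ := Gdel_edge_no_u hleaf he
    obtain ⟨c, hcC, hce⟩ := hC e (Gdel_edge_mem.1 he).1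
    refine ⟨c, ⟨hcC, ?_⟩, hce⟩
    rintro (rfl | rfl)
    · exact hu hce
    · exact hv hce
  have h1 : D.ncard ≤ (C \ {u, v}).ncard := hD.2 _ hCvc
  obtain ⟨c, hcC, hce⟩ := hC s(u, v) huv
  have hc2 : c = u ∨ c = v := Sym2.mem_iff.1 hce
  have hsub : C \ {u, v} ⊆ C \ {c} := by
    intro z ⟨hz1, hz2⟩
    refine ⟨hz1, fun hh => hz2 ?_⟩
    rcases hc2 with rfl | rfl
    · exact Or.inl hh
    · exact Or.inr hh
  have h2 : (C \ {u, v}).ncard ≤ (C \ {c}).ncard :=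
    Set.ncard_le_ncard hsub (C \ {c}).toFinite
  have h3 : (C \ {c}).ncard + 1 = C.ncard :=
    Set.ncard_diff_singleton_add_one hcC C.toFinite
  omega

lemma tfam_v {D : Set V} (huv : A.Adj u v) (hleaf : ∀ w, A.Adj u w → w = v)
    (hD : IsMinVC (Gdel A v) D) : IsMinVC A (insert v D) := by
  have hvD : v ∉ D := not_mem_minVC_of_isolated hD (Gdel_isolated A v)
  refine ⟨tfam_vc_v hleaf hD.1, fun C hC => ?_⟩
  rw [Set.ncard_insert_of_notMem hvD D.toFinite]
  exact tfam_low huv hleaf hD hC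

lemma tfam_u {D : Set V} (huv : A.Adj u v) (hleaf : ∀ w, A.Adj u w → w = v)
    (hD : IsMinVC (Gdel A v) D) (hS : Sset A u v ⊆ D) : IsMinVC A (insert u D) := by
  have huD : u ∉ D := not_mem_minVC_of_isolated hD (Gdel_isolated_u hleaf huv)
  refine ⟨tfam_vc_u hleaf hD.1 hS, fun C hC => ?_⟩
  rw [Set.ncard_insert_of_notMem huD D.toFinite]
  exact tfam_low huv hleaf hD hC

lemma tchar {C : Set V} (huv : A.Adj u v) (hleaf : ∀ w, A.Adj u w → w = v)
    (hC : IsMinVC A C) :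
    ∃ D, IsMinVC (Gdel A v) D ∧
      (C = insert v D ∨ (C = insert u D ∧ Sset A u v ⊆ D)) := by
  have hmin : ∀ z ∈ C, IsVC (Gdel A v) (C \ {z}) → IsMinVC (Gdel A v) (C \ {z}) := by
    intro z hz hvc
    refine ⟨hvc, fun E hE => ?_⟩
    have h1 : C.ncard ≤ (insert v E).ncard := hC.2 _ (tfam_vc_v hleaf hE)
    have h2 : (insert v E).ncard ≤ E.ncard + 1 := Set.ncard_insert_le v E
    have h3 : (C \ {z}).ncard + 1 = C.ncard :=
      Set.ncard_diff_singleton_add_one hz C.toFinite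
    omega
  obtain ⟨c, hcC, hce⟩ := hC.1 s(u, v) huv
  have hc2 : c = u ∨ c = v := Sym2.mem_iff.1 hce
  by_cases hvC : v ∈ C
  · have huC : u ∉ C := by
      intro huC
      have hvc : IsVC A (C \ {u}) := by
        intro e he
        obtain ⟨c', hc'C, hc'e⟩ := hC.1 e he
        by_cases hcu : c' = u
        · have heq : e = s(u, v) := leaf_edge_eq hleaf he (hcu ▸ hc'e)
          refine ⟨v, ⟨hvC, fun hh => ?_⟩, heq ▸ Sym2.mem_mk_right u v⟩
          rw [Set.mem_singleton_iff] at hh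
          rw [hh] at huv
          exact A.irrefl huv
        · exact ⟨c', ⟨hc'C, hcu⟩, hc'e⟩
      have h1 := hC.2 _ hvc
      have h2 : (C \ {u}).ncard < C.ncard :=
        Set.ncard_diff_singleton_lt_of_mem huC C.toFinite
      omega
    have hvc : IsVC (Gdel A v) (C \ {v}) := by
      intro e he
      obtain ⟨hu, hv⟩ := Gdel_edge_no_u hleaf he
      obtain ⟨c', hc'C, hc'e⟩ := hC.1 e (Gdel_edge_mem.1 he).1
      exact ⟨c', ⟨hc'C, fun hh => hv (hh ▸ hc'e)⟩, hc'e⟩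
    refine ⟨C \ {v}, hmin v hvC hvc, Or.inl ?_⟩
    rw [Set.insert_diff_singleton, Set.insert_eq_self.2 hvC]
  · have huC : u ∈ C := by
      rcases hc2 with rfl | rfl
      · exact hcC
      · exact absurd hcC hvC
    have hvc : IsVC (Gdel A v) (C \ {u}) := by
      intro e he
      obtain ⟨hu, hv⟩ := Gdel_edge_no_u hleaf he
      obtain ⟨c', hc'C, hc'e⟩ := hC.1 e (Gdel_edge_mem.1 he).1
      exact ⟨c', ⟨hc'C, fun hh => hu (hh ▸ hc'e)⟩, hc'e⟩
    refine ⟨C \ {u}, hmin u huC hvc, Or.inr ⟨?_, ?_⟩⟩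
    · rw [Set.insert_diff_singleton, Set.insert_eq_self.2 huC]
    · rintro x ⟨hvx, hxu⟩
      obtain ⟨c', hc'C, hc'e⟩ := hC.1 s(v, x) hvx
      rcases Sym2.mem_iff.1 hc'e with rfl | rfl
      · exact absurd hc'C hvC
      · exact ⟨hc'C, hxu⟩

end transfer


lemma step (A : SimpleGraph V) (hac : A.IsAcyclic) {u v : V} (huv : A.Adj u v)
    (hleaf : ∀ w, A.Adj u w → w = v)
    (IH : IsBColoring (Gdel A v) (PosBB (Gdel A v)) {e | Exclusive (Gdel A v) e}
      (NegBB (Gdel A v))) :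
    IsBColoring A (PosBB A) {e | Exclusive A e} (NegBB A) := by
  obtain ⟨ih1, ih2, ih3, ih4, ih5, ih6, ih7, ih8⟩ := IH
  have huv' : u ≠ v := huv.ne
  have hvu : A.Adj v u := huv.symm
  obtain ⟨D0, hD0⟩ := exists_minVC (Gdel A v)
  have hvG : v ∈ NegBB (Gdel A v) := fun C hC =>
    not_mem_minVC_of_isolated hC (Gdel_isolated A v)
  have huG : u ∈ NegBB (Gdel A v) := fun C hC =>
    not_mem_minVC_of_isolated hC (Gdel_isolated_u hleaf huv)
  by_cases hP : ∃ D, IsMinVC (Gdel A v) D ∧ Sset A u v ⊆ D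
  · -- positive case
    obtain ⟨Ds, hDs, hSDs⟩ := hP
    have hvDs : v ∉ Ds := hvG _ hDs
    have huDs : u ∉ Ds := huG _ hDs
    have hCu : IsMinVC A (insert u Ds) := tfam_u huv hleaf hDs hSDs
    have hBA : PosBB A = PosBB (Gdel A v) := by
      ext w
      constructor
      · intro hw D hD
        have h1 := hw _ (tfam_v huv hleaf hD)
        rcases Set.mem_insert_iff.1 h1 with h1 | h1
        · have h2 := hw _ hCu
          rcases Set.mem_insert_iff.1 h2 with h2 | h2
          · exact absurd (h2.symm.trans h1) huv'
          · rw [h1] at h2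
            exact absurd h2 hvDs
        · exact h1
      · intro hw C hC
        obtain ⟨D, hD, hcase⟩ := tchar huv hleaf hC
        rcases hcase with rfl | ⟨rfl, hSD⟩ <;> exact Set.mem_insert_of_mem _ (hw _ hD)
    have hGA : NegBB A = NegBB (Gdel A v) \ {u, v} := by
      ext w
      constructor
      · intro hw
        refine ⟨fun D hD hwD => hw _ (tfam_v huv hleaf hD) (Set.mem_insert_of_mem _ hwD), ?_⟩
        intro hm
        rcases hm with h | h
        · exact hw _ hCu (by rw [h]; exact Set.mem_insert u Ds)
        · exact hw _ (tfam_v huv hleaf hDs)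
            (by rw [Set.mem_singleton_iff.1 h]; exact Set.mem_insert v Ds)
      · rintro ⟨hw, hw2⟩ C hC hwC
        obtain ⟨D, hD, hcase⟩ := tchar huv hleaf hC
        rcases hcase with rfl | ⟨rfl, hSD⟩
        · rcases Set.mem_insert_iff.1 hwC with h | h
          · exact hw2 (Or.inr h)
          · exact hw _ hD h
        · rcases Set.mem_insert_iff.1 hwC with h | h
          · exact hw2 (Or.inl h)
          · exact hw _ hD h
    have hDeg : ∀ w, w ≠ u → w ≠ v → (Degen A w ↔ Degen (Gdel A v) w) := by
      intro w hwu hwv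
      constructor
      · rintro ⟨⟨C, hC, hwC⟩, ⟨C', hC', hwC'⟩⟩
        obtain ⟨D, hD, hcase⟩ := tchar huv hleaf hC
        obtain ⟨D', hD', hcase'⟩ := tchar huv hleaf hC'
        refine ⟨⟨D, hD, ?_⟩, ⟨D', hD', ?_⟩⟩
        · rcases hcase with rfl | ⟨rfl, -⟩
          · rcases Set.mem_insert_iff.1 hwC with h | h
            · exact absurd h hwv
            · exact h
          · rcases Set.mem_insert_iff.1 hwC with h | h
            · exact absurd h hwu
            · exact h
        · rcases hcase' with rfl | ⟨rfl, -⟩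
          · exact fun h => hwC' (Set.mem_insert_of_mem _ h)
          · exact fun h => hwC' (Set.mem_insert_of_mem _ h)
      · rintro ⟨⟨D, hD, hwD⟩, ⟨D', hD', hwD'⟩⟩
        refine ⟨⟨insert v D, tfam_v huv hleaf hD, Set.mem_insert_of_mem _ hwD⟩,
          ⟨insert v D', tfam_v huv hleaf hD', ?_⟩⟩
        intro h
        rcases Set.mem_insert_iff.1 h with h | h
        · exact hwv h
        · exact hwD' h
    have hDegu : Degen A u :=
      ⟨⟨insert u Ds, hCu, Set.mem_insert _ _⟩,
        ⟨insert v Ds, tfam_v huv hleaf hDs,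
          fun h => (Set.mem_insert_iff.1 h).elim huv' huDs⟩⟩
    have hDegv : Degen A v :=
      ⟨⟨insert v Ds, tfam_v huv hleaf hDs, Set.mem_insert _ _⟩,
        ⟨insert u Ds, hCu, fun h => (Set.mem_insert_iff.1 h).elim (fun h => huv' h.symm) hvDs⟩⟩
    have hRA : {e | Exclusive A e} = insert s(u, v) {e | Exclusive (Gdel A v) e} := by
      ext e
      simp only [Set.mem_setOf_eq, Set.mem_insert_iff]
      constructor
      · intro he
        by_cases hve : v ∈ e
        · left
          obtain ⟨x, hvx, rfl⟩ := adj_of_mem_edge he.1 hve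
          by_cases hxu : x = u
          · rw [hxu]; exact Sym2.eq_swap
          · exfalso
            have hxv : x ≠ v := hvx.ne'
            have hdx : Degen A x := he.2.1 x (Sym2.mem_mk_right v x)
            obtain ⟨⟨C, hC, hxC⟩, -⟩ := hdx
            obtain ⟨D, hD, hcase⟩ := tchar huv hleaf hC
            have hxD : x ∈ D := by
              rcases hcase with rfl | ⟨rfl, -⟩
              · rcases Set.mem_insert_iff.1 hxC with h | h
                · exact absurd h hxv
                · exact h
              · rcases Set.mem_insert_iff.1 hxC with h | h
                · exact absurd h hxu
                · exact h
            obtain ⟨z, hze, hzC⟩ := he.2.2 (insert v D) (tfam_v huv hleaf hD)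
            rcases Sym2.mem_iff.1 hze with rfl | rfl
            · exact hzC (Set.mem_insert _ _)
            · exact hzC (Set.mem_insert_of_mem _ hxD)
        · right
          have hue : u ∉ e := fun hu =>
            hve (by rw [leaf_edge_eq hleaf he.1 hu]; exact Sym2.mem_mk_right u v)
          refine ⟨Gdel_edge_mem.2 ⟨he.1, hve⟩, ?_, ?_⟩
          · intro w hwe
            exact (hDeg w (fun h => hue (h ▸ hwe)) (fun h => hve (h ▸ hwe))).1 (he.2.1 w hwe)
          · intro D hD
            obtain ⟨z, hze, hzC⟩ := he.2.2 (insert v D) (tfam_v huv hleaf hD)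
            exact ⟨z, hze, fun hzD => hzC (Set.mem_insert_of_mem _ hzD)⟩
      · rintro (rfl | he)
        · refine ⟨huv, ?_, ?_⟩
          · intro w hwe
            rcases Sym2.mem_iff.1 hwe with rfl | rfl
            · exact hDegu
            · exact hDegv
          · intro C hC
            obtain ⟨D, hD, hcase⟩ := tchar huv hleaf hC
            rcases hcase with rfl | ⟨rfl, -⟩
            · exact ⟨u, Sym2.mem_mk_left u v,
                fun h => (Set.mem_insert_iff.1 h).elim huv' (huG _ hD)⟩
            · exact ⟨v, Sym2.mem_mk_right u v,
                fun h => (Set.mem_insert_iff.1 h).elim (fun h => huv' h.symm) (hvG _ hD)⟩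
        · obtain ⟨hue, hve⟩ := Gdel_edge_no_u hleaf he.1
          refine ⟨(Gdel_edge_mem.1 he.1).1, ?_, ?_⟩
          · intro w hwe
            exact (hDeg w (fun h => hue (h ▸ hwe)) (fun h => hve (h ▸ hwe))).2 (he.2.1 w hwe)
          · intro C hC
            obtain ⟨D, hD, hcase⟩ := tchar huv hleaf hC
            obtain ⟨z, hze, hzD⟩ := he.2.2 D hD
            have hzu : z ≠ u := fun h => hue (h ▸ hze)
            have hzv : z ≠ v := fun h => hve (h ▸ hze)
            rcases hcase with rfl | ⟨rfl, -⟩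
            · exact ⟨z, hze, fun h => (Set.mem_insert_iff.1 h).elim hzv hzD⟩
            · exact ⟨z, hze, fun h => (Set.mem_insert_iff.1 h).elim hzu hzD⟩
    rw [hBA, hGA, hRA]
    refine ⟨?_, ?_, ?_, ?_, ?_, ?_, ?_, ?_⟩
    · -- R ⊆ edges
      intro e he
      rcases Set.mem_insert_iff.1 he with rfl | he
      · exact (mem_edgeSet A).2 huv
      · exact (Gdel_edge_mem.1 (ih1 he)).1
    · -- covers univ
      apply Set.eq_univ_iff_forall.2
      intro w
      have hw : w ∈ PosBB (Gdel A v) ∪ NegBB (Gdel A v) ∪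
          Rsupp {e | Exclusive (Gdel A v) e} := ih2.symm ▸ Set.mem_univ w
      rcases hw with (hB | hG) | hR
      · exact Or.inl (Or.inl hB)
      · by_cases hwu : w = u
        · exact Or.inr ⟨s(u, v), Set.mem_insert _ _, hwu ▸ Sym2.mem_mk_left u v⟩
        · by_cases hwv : w = v
          · exact Or.inr ⟨s(u, v), Set.mem_insert _ _, hwv ▸ Sym2.mem_mk_right u v⟩
          · refine Or.inl (Or.inr ⟨hG, ?_⟩)
            intro hm
            rcases hm with h | h
            · exact hwu h
            · exact hwv h
      · obtain ⟨e, heR, hwe⟩ := hR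
        exact Or.inr ⟨e, Set.mem_insert_of_mem _ heR, hwe⟩
    · -- Disjoint B G
      rw [Set.disjoint_left]
      rintro a haB ⟨haG, -⟩
      exact (Set.disjoint_left.1 ih3) haB haG
    · -- Disjoint B Rsupp
      rw [Set.disjoint_left]
      rintro a haB ⟨e, heR, hae⟩
      rcases Set.mem_insert_iff.1 heR with rfl | heR
      · rcases Sym2.mem_iff.1 hae with rfl | rfl
        · exact (Set.disjoint_left.1 ih3) haB huG
        · exact (Set.disjoint_left.1 ih3) haB hvG
      · exact (Set.disjoint_left.1 ih4) haB ⟨e, heR, hae⟩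
    · -- Disjoint G Rsupp
      rw [Set.disjoint_left]
      rintro a ⟨haG, hauv⟩ ⟨e, heR, hae⟩
      rcases Set.mem_insert_iff.1 heR with rfl | heR
      · rcases Sym2.mem_iff.1 hae with rfl | rfl
        · exact hauv (Or.inl rfl)
        · exact hauv (Or.inr rfl)
      · exact (Set.disjoint_left.1 ih5) haG ⟨e, heR, hae⟩
    · -- matching
      intro e he f hf hef w hw
      rcases Set.mem_insert_iff.1 he with rfl | he
      · rcases Set.mem_insert_iff.1 hf with rfl | hf
        · exact hef rfl
        · have := Gdel_edge_no_u hleaf (ih1 hf)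
          rcases Sym2.mem_iff.1 hw.1 with rfl | rfl
          · exact this.1 hw.2
          · exact this.2 hw.2
      · rcases Set.mem_insert_iff.1 hf with rfl | hf
        · have := Gdel_edge_no_u hleaf (ih1 he)
          rcases Sym2.mem_iff.1 hw.2 with rfl | rfl
          · exact this.1 hw.1
          · exact this.2 hw.1
        · exact ih6 e he f hf hef w hw
    · -- G-neighbors in B
      rintro a b hab ⟨haG, hauv⟩
      by_cases hbv : b = v
      · exfalso
        rw [hbv] at hab
        have haS : a ∈ Sset A u v := ⟨hab.symm, fun h => hauv (Or.inl h)⟩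
        exact (haG _ hDs) (hSDs haS)
      · have hav : a ≠ v := fun h => hauv (Or.inr h)
        exact ih7 a b ⟨hab, hav, hbv⟩ haG
    · -- two G-neighbors
      intro b hbB
      have hsub : (Gdel A v).neighborSet b ∩ NegBB (Gdel A v) ⊆
          A.neighborSet b ∩ (NegBB (Gdel A v) \ {u, v}) := by
        rintro w ⟨hw1, hw2⟩
        have hw1' : (Gdel A v).Adj b w := hw1
        refine ⟨hw1'.1, hw2, ?_⟩
        rintro (rfl | rfl)
        · exact Gdel_isolated_u hleaf huv b hw1'.symm
        · exact hw1'.2.2 rfl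
      calc 2 ≤ ((Gdel A v).neighborSet b ∩ NegBB (Gdel A v)).ncard := ih8 b hbB
        _ ≤ _ := Set.ncard_le_ncard hsub (Set.toFinite _)
  · -- negative case
    have hchar : ∀ {C}, IsMinVC A C → ∃ D, IsMinVC (Gdel A v) D ∧ C = insert v D := by
      intro C hC
      obtain ⟨D, hD, hcase⟩ := tchar huv hleaf hC
      rcases hcase with h | ⟨h, hS⟩
      · exact ⟨D, hD, h⟩
      · exact absurd ⟨D, hD, hS⟩ hP
    have hBA : PosBB A = insert v (PosBB (Gdel A v)) := by
      ext w
      constructor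
      · intro hw
        by_cases hwv : w = v
        · rw [hwv]; exact Set.mem_insert _ _
        · refine Set.mem_insert_of_mem _ (fun D hD => ?_)
          have h1 := hw _ (tfam_v huv hleaf hD)
          rcases Set.mem_insert_iff.1 h1 with h | h
          · exact absurd h hwv
          · exact h
      · intro hw C hC
        obtain ⟨D, hD, rfl⟩ := hchar hC
        rcases Set.mem_insert_iff.1 hw with h | hw
        · rw [h]; exact Set.mem_insert _ _
        · exact Set.mem_insert_of_mem _ (hw _ hD)
    have hGA : NegBB A = NegBB (Gdel A v) \ {v} := by
      ext w
      constructor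
      · intro hw
        refine ⟨fun D hD hwD => hw _ (tfam_v huv hleaf hD) (Set.mem_insert_of_mem _ hwD), ?_⟩
        intro hm
        exact hw _ (tfam_v huv hleaf hD0)
          (by rw [Set.mem_singleton_iff.1 hm]; exact Set.mem_insert v D0)
      · rintro ⟨hw, hwv⟩ C hC hwC
        obtain ⟨D, hD, rfl⟩ := hchar hC
        rcases Set.mem_insert_iff.1 hwC with h | h
        · exact hwv h
        · exact hw _ hD h
    have hDeg : ∀ w, w ≠ v → (Degen A w ↔ Degen (Gdel A v) w) := by
      intro w hwv
      constructor
      · rintro ⟨⟨C, hC, hwC⟩, ⟨C', hC', hwC'⟩⟩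
        obtain ⟨D, hD, rfl⟩ := hchar hC
        obtain ⟨D', hD', rfl⟩ := hchar hC'
        refine ⟨⟨D, hD, ?_⟩, ⟨D', hD', fun h => hwC' (Set.mem_insert_of_mem _ h)⟩⟩
        rcases Set.mem_insert_iff.1 hwC with h | h
        · exact absurd h hwv
        · exact h
      · rintro ⟨⟨D, hD, hwD⟩, ⟨D', hD', hwD'⟩⟩
        refine ⟨⟨insert v D, tfam_v huv hleaf hD, Set.mem_insert_of_mem _ hwD⟩,
          ⟨insert v D', tfam_v huv hleaf hD', ?_⟩⟩
        intro h
        rcases Set.mem_insert_iff.1 h with h | h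
        · exact hwv h
        · exact hwD' h
    have hnDegv : ¬ Degen A v := by
      rintro ⟨-, ⟨C, hC, hvC⟩⟩
      obtain ⟨D, hD, rfl⟩ := hchar hC
      exact hvC (Set.mem_insert _ _)
    have hnDegu : ¬ Degen A u := by
      rintro ⟨⟨C, hC, huC⟩, -⟩
      obtain ⟨D, hD, rfl⟩ := hchar hC
      rcases Set.mem_insert_iff.1 huC with h | h
      · exact huv' h
      · exact huG _ hD h
    have hRA : {e | Exclusive A e} = {e | Exclusive (Gdel A v) e} := by
      ext e
      simp only [Set.mem_setOf_eq]
      constructor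
      · intro he
        have hve : v ∉ e := fun h => hnDegv (he.2.1 v h)
        have hue : u ∉ e := fun h => hnDegu (he.2.1 u h)
        refine ⟨Gdel_edge_mem.2 ⟨he.1, hve⟩, ?_, ?_⟩
        · intro w hwe
          exact (hDeg w (fun h => hve (h ▸ hwe))).1 (he.2.1 w hwe)
        · intro D hD
          obtain ⟨z, hze, hzC⟩ := he.2.2 (insert v D) (tfam_v huv hleaf hD)
          exact ⟨z, hze, fun hzD => hzC (Set.mem_insert_of_mem _ hzD)⟩
      · intro he
        obtain ⟨hue, hve⟩ := Gdel_edge_no_u hleaf he.1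
        refine ⟨(Gdel_edge_mem.1 he.1).1, ?_, ?_⟩
        · intro w hwe
          exact (hDeg w (fun h => hve (h ▸ hwe))).2 (he.2.1 w hwe)
        · intro C hC
          obtain ⟨D, hD, rfl⟩ := hchar hC
          obtain ⟨z, hze, hzD⟩ := he.2.2 D hD
          exact ⟨z, hze, fun h =>
            (Set.mem_insert_iff.1 h).elim (fun h => hve (h ▸ hze)) hzD⟩
    rw [hBA, hGA, hRA]
    refine ⟨?_, ?_, ?_, ?_, ?_, ?_, ?_, ?_⟩
    · intro e he
      exact (Gdel_edge_mem.1 (ih1 he)).1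
    · apply Set.eq_univ_iff_forall.2
      intro w
      have hw : w ∈ PosBB (Gdel A v) ∪ NegBB (Gdel A v) ∪
          Rsupp {e | Exclusive (Gdel A v) e} := ih2.symm ▸ Set.mem_univ w
      rcases hw with (hB | hG) | hR
      · exact Or.inl (Or.inl (Set.mem_insert_of_mem _ hB))
      · by_cases hwv : w = v
        · exact Or.inl (Or.inl (hwv ▸ Set.mem_insert _ _))
        · exact Or.inl (Or.inr ⟨hG, hwv⟩)
      · exact Or.inr hR
    · rw [Set.disjoint_left]
      rintro a haB ⟨haG, hav⟩
      rcases Set.mem_insert_iff.1 haB with rfl | haB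
      · exact hav rfl
      · exact (Set.disjoint_left.1 ih3) haB haG
    · rw [Set.disjoint_left]
      rintro a haB haR
      rcases Set.mem_insert_iff.1 haB with rfl | haB
      · exact (Set.disjoint_left.1 ih5) hvG haR
      · exact (Set.disjoint_left.1 ih4) haB haR
    · rw [Set.disjoint_left]
      rintro a ⟨haG, -⟩ haR
      exact (Set.disjoint_left.1 ih5) haG haR
    · exact ih6
    · rintro a b hab ⟨haG, hav⟩
      by_cases hbv : b = v
      · rw [hbv]; exact Set.mem_insert _ _
      · have hav' : a ≠ v := fun h => hav h
        exact Set.mem_insert_of_mem _ (ih7 a b ⟨hab, hav', hbv⟩ haG)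
    · intro b hbB
      rcases Set.mem_insert_iff.1 hbB with hbv | hbB
      · -- b = v : use the gluing argument
        rw [hbv]
        have hex : ∃ x, x ∈ Sset A u v ∧ x ∈ NegBB (Gdel A v) := by
          by_contra hno
          push_neg at hno
          have hxBR : ∀ x ∈ Sset A u v,
              x ∈ PosBB (Gdel A v) ∨ x ∈ Rsupp {e | Exclusive (Gdel A v) e} := by
            intro x hx
            have hx2 : x ∈ PosBB (Gdel A v) ∪ NegBB (Gdel A v) ∪
                Rsupp {e | Exclusive (Gdel A v) e} := ih2.symm ▸ Set.mem_univ x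
            rcases hx2 with (h | h) | h
            · exact Or.inl h
            · exact absurd h (hno x hx)
            · exact Or.inr h
          have key : ∃ D, IsMinVC (Gdel A v) D ∧ Sset A u v ⊆ D := by
            refine Set.Finite.induction_on_subset (motive := fun T _ => ∃ D, IsMinVC (Gdel A v) D ∧ T ⊆ D) _ (Set.toFinite (Sset A u v))
              ⟨D0, hD0, Set.empty_subset _⟩ ?_
            rintro a T haS hTS haT ⟨D₁, hD₁, hTD₁⟩
            rcases hxBR a haS with haB | ⟨e, heR, hae⟩
            · exact ⟨D₁, hD₁, Set.insert_subset_iff.2 ⟨haB _ hD₁, hTD₁⟩⟩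
            · have hdega : Degen (Gdel A v) a := heR.2.1 a hae
              obtain ⟨⟨Da, hDa, haDa⟩, -⟩ := hdega
              have hU : ∀ p q, (Gdel A v).Adj p q →
                  (p ∈ {w | (Gdel A v).Reachable a w} ↔ q ∈ {w | (Gdel A v).Reachable a w}) :=
                fun p q hpq =>
                  ⟨fun h => h.trans hpq.reachable, fun h => h.trans hpq.symm.reachable⟩
              refine ⟨(D₁ \ {w | (Gdel A v).Reachable a w}) ∪
                (Da ∩ {w | (Gdel A v).Reachable a w}), glue_isMinVC hU hD₁ hDa, ?_⟩
              rw [Set.insert_subset_iff]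
              refine ⟨Or.inr ⟨haDa, Reachable.refl a⟩, ?_⟩
              intro y hyT
              refine Or.inl ⟨hTD₁ hyT, fun hyU => ?_⟩
              exact Gdel_separation hac haS.1 ((hTS hyT).1) (fun h => haT (h ▸ hyT)) hyU
          exact hP key
        obtain ⟨x, hxS, hxG⟩ := hex
        have hux : u ≠ x := fun h => hxS.2 h.symm
        have hpair : ({u, x} : Set V) ⊆ A.neighborSet v ∩ (NegBB (Gdel A v) \ {v}) := by
          rintro z (rfl | rfl)
          · exact ⟨hvu, huG, fun h => huv' h⟩
          · exact ⟨hxS.1, hxG, hxS.1.ne'⟩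
        calc 2 = ({u, x} : Set V).ncard := (Set.ncard_pair hux).symm
          _ ≤ _ := Set.ncard_le_ncard hpair (Set.toFinite _)
      · have hsub : (Gdel A v).neighborSet b ∩ NegBB (Gdel A v) ⊆
            A.neighborSet b ∩ (NegBB (Gdel A v) \ {v}) := by
          rintro w ⟨hw1, hw2⟩
          have hw1' : (Gdel A v).Adj b w := hw1
          exact ⟨hw1'.1, hw2, fun h => hw1'.2.2 h⟩
        calc 2 ≤ ((Gdel A v).neighborSet b ∩ NegBB (Gdel A v)).ncard := ih8 b hbB
          _ ≤ _ := Set.ncard_le_ncard hsub (Set.toFinite _)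

lemma base_case (A : SimpleGraph V) (hE : A.edgeSet = ∅) :
    IsBColoring A (PosBB A) {e | Exclusive A e} (NegBB A) := by
  have hvc0 : IsVC A ∅ := fun e he => absurd (hE ▸ he) (Set.notMem_empty e)
  have hmin0 : IsMinVC A ∅ := ⟨hvc0, fun D hD => by simp⟩
  have hpos : PosBB A = ∅ :=
    Set.eq_empty_iff_forall_notMem.2 fun w hw => Set.notMem_empty w (hw ∅ hmin0)
  have hall : ∀ C, IsMinVC A C → C = ∅ := by
    intro C hC
    have h1 := hC.2 ∅ hvc0
    rw [Set.ncard_empty] at h1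
    exact (Set.ncard_eq_zero C.toFinite).1 (by omega)
  have hneg : NegBB A = Set.univ :=
    Set.eq_univ_iff_forall.2 fun w C hC hwC => by
      rw [hall C hC] at hwC; exact Set.notMem_empty w hwC
  have hR : {e : Sym2 V | Exclusive A e} = ∅ :=
    Set.eq_empty_iff_forall_notMem.2 fun e he => Set.notMem_empty e (hE ▸ he.1)
  rw [hpos, hneg, hR]
  have hRs : Rsupp (∅ : Set (Sym2 V)) = ∅ := by
    apply Set.eq_empty_iff_forall_notMem.2
    rintro w ⟨e, he, -⟩
    exact Set.notMem_empty e he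
  refine ⟨?_, ?_, ?_, ?_, ?_, ?_, ?_, ?_⟩
  · intro e he; exact absurd he (Set.notMem_empty e)
  · simp
  · exact Set.disjoint_left.2 fun a ha => absurd ha (Set.notMem_empty a)
  · exact Set.disjoint_left.2 fun a ha => absurd ha (Set.notMem_empty a)
  · rw [hRs]
    exact Set.disjoint_right.2 fun a ha => absurd ha (Set.notMem_empty a)
  · intro e he; exact absurd he (Set.notMem_empty e)
  · intro a b hab
    exact absurd ((mem_edgeSet A).2 hab)
      (by rw [hE]; exact Set.notMem_empty _)
  · intro b hb; exact absurd hb (Set.notMem_empty b)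

lemma forest_bcoloring : ∀ n (A : SimpleGraph V), A.IsAcyclic → A.edgeSet.ncard ≤ n →
    IsBColoring A (PosBB A) {e | Exclusive A e} (NegBB A) := by
  intro n
  induction n with
  | zero =>
    intro A hac hcard
    have h0 : A.edgeSet = ∅ := (Set.ncard_eq_zero A.edgeSet.toFinite).1 (by omega)
    exact base_case A h0
  | succ n ih =>
    intro A hac hcard
    by_cases hE : A.edgeSet = ∅
    · exact base_case A hE
    · obtain ⟨e, he⟩ := Set.nonempty_iff_ne_empty.2 hE
      have hadj : ∃ a b, A.Adj a b := by
        induction e with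
        | _ a b => exact ⟨a, b, he⟩
      obtain ⟨a, b, hab⟩ := hadj
      obtain ⟨u, v, huv, hleaf⟩ := exists_leaf hac hab
      apply step A hac huv hleaf
      apply ih (Gdel A v) (Gdel_acyclic hac v)
      have hss : (Gdel A v).edgeSet ⊂ A.edgeSet := by
        refine Set.ssubset_iff_subset_ne.2 ⟨fun e he => (Gdel_edge_mem.1 he).1, ?_⟩
        intro h
        have h1 : s(u, v) ∈ (Gdel A v).edgeSet := h ▸ ((mem_edgeSet A).2 huv)
        exact (Gdel_edge_mem.1 h1).2 (Sym2.mem_mk_right u v)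
      have := Set.ncard_lt_ncard hss A.edgeSet.toFinite
      omega

theorem bColoring_exists (A : SimpleGraph V) (hA : A.IsTree) :
    IsBColoring A (PosBB A) {e | Exclusive A e} (NegBB A) :=
  forest_bcoloring A.edgeSet.ncard A hA.2 le_rfl
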